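/- arXiv:2003.13427 — 4 statements merged into one kernel-verified Lean document; each statement's English description precedes it below -/
import Mathlib

section
/- For any continuously differentiable function ξ on (0, r₀] and any r ∈ (0, r₀/6), one has ξ(r) ≤ √(6/r₀) (∫_{r₀/6}^{r₀/3} |ξ(a)|² da)^{1/2} + (∫_r^{r₀/3} |ξ'(s)|² s ds)^{1/2} · |ln(r₀/3) − ln r|^{1/2}. -/
open MeasureTheory Set intervalIntegral Real

/-- Weighted Hardy-type pointwise bound near the origin. -/
theorem stmt_0 (r₀ : ℝ) (hr₀ : 0 < r₀) (ξ ξ' : ℝ → ℝ)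
    (hderiv : ∀ x ∈ Set.Ioc (0:ℝ) r₀, HasDerivAt ξ (ξ' x) x)
    (hcont : ContinuousOn ξ' (Set.Ioc 0 r₀))
    (r : ℝ) (hr : r ∈ Set.Ioo (0:ℝ) (r₀/6)) :
    ξ r ≤ Real.sqrt (6/r₀) * Real.sqrt (∫ a in Set.Ioc (r₀/6) (r₀/3), |ξ a|^2)
      + Real.sqrt (∫ s in Set.Ioc r (r₀/3), |ξ' s|^2 * s)
        * Real.sqrt |Real.log (r₀/3) - Real.log r| := by
  obtain ⟨hr0, hr6⟩ := hr
  have h63 : r₀/6 < r₀/3 := by linarith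
  have h30 : r₀/3 ≤ r₀ := by linarith
  have h60 : 0 < r₀/6 := by linarith
  have hcξ : ContinuousOn ξ (Set.Ioc 0 r₀) := fun x hx =>
    (hderiv x hx).continuousAt.continuousWithinAt
  have hsub : Set.Icc (r₀/6) (r₀/3) ⊆ Set.Ioc 0 r₀ := fun x hx =>
    ⟨lt_of_lt_of_le h60 hx.1, le_trans hx.2 h30⟩
  obtain ⟨a, ha, hmin⟩ := (isCompact_Icc (a := r₀/6) (b := r₀/3)).exists_isMinOn
    (Set.nonempty_Icc.2 h63.le) ((hcξ.mono hsub).abs)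
  have hra : r < a := lt_of_lt_of_le hr6 ha.1
  have hsub2 : Set.Icc r a ⊆ Set.Ioc 0 r₀ := fun x hx =>
    ⟨lt_of_lt_of_le hr0 hx.1, le_trans hx.2 (le_trans ha.2 h30)⟩
  -- Step 1: |ξ a| ≤ √(6/r₀) √(∫ |ξ|²)
  have hIξ : IntegrableOn (fun x => |ξ x|^2) (Set.Ioc (r₀/6) (r₀/3)) := by
    apply ((((hcξ.mono hsub).abs).pow 2).integrableOn_compact isCompact_Icc).mono_set
      Set.Ioc_subset_Icc_self
  have hstep1 : |ξ a| ≤ Real.sqrt (6/r₀) * Real.sqrt (∫ x in Set.Ioc (r₀/6) (r₀/3), |ξ x|^2) := by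
    have hlb : |ξ a|^2 * (r₀/6) ≤ ∫ x in Set.Ioc (r₀/6) (r₀/3), |ξ x|^2 := by
      have : ∫ x in Set.Ioc (r₀/6) (r₀/3), |ξ a|^2 ≤ ∫ x in Set.Ioc (r₀/6) (r₀/3), |ξ x|^2 := by
        refine setIntegral_mono_on (integrableOn_const (by simp)) hIξ
          measurableSet_Ioc (fun x hx => ?_)
        exact pow_le_pow_left₀ (abs_nonneg _) (hmin (Set.Ioc_subset_Icc_self hx)) 2
      calc |ξ a|^2 * (r₀/6) = ∫ x in Set.Ioc (r₀/6) (r₀/3), |ξ a|^2 := by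
              rw [setIntegral_const]
              rw [measureReal_def, Real.volume_Ioc]
              rw [ENNReal.toReal_ofReal (by linarith)]
              simp [smul_eq_mul]; ring
        _ ≤ _ := this
    have h1 : |ξ a|^2 ≤ (6/r₀) * ∫ x in Set.Ioc (r₀/6) (r₀/3), |ξ x|^2 := by
      rw [div_mul_eq_mul_div, le_div_iff₀ hr₀]
      nlinarith
    calc |ξ a| = Real.sqrt (|ξ a|^2) := (Real.sqrt_sq (abs_nonneg _)).symm
      _ ≤ Real.sqrt ((6/r₀) * ∫ x in Set.Ioc (r₀/6) (r₀/3), |ξ x|^2) := Real.sqrt_le_sqrt h1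
      _ = _ := Real.sqrt_mul (by positivity) _
  -- Step 2: FTC
  have hint : IntervalIntegrable ξ' volume r a := by
    apply (hcont.mono ?_).intervalIntegrable
    rw [Set.uIcc_of_le hra.le]; exact hsub2
  have hFTC : ∫ x in r..a, ξ' x = ξ a - ξ r := by
    apply intervalIntegral.integral_eq_sub_of_hasDerivAt (fun x hx => ?_) hint
    exact hderiv x (hsub2 (by rwa [Set.uIcc_of_le hra.le] at hx))
  -- Step 3: Cauchy–Schwarz bound on ∫_r^a |ξ'|
  have hcsub : ContinuousOn ξ' (Set.Icc r a) := hcont.mono hsub2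
  have hsq : Continuous fun s : ℝ => Real.sqrt s := Real.continuous_sqrt
  have hf : ContinuousOn (fun s => |ξ' s| * Real.sqrt s) (Set.Icc r a) :=
    hcsub.abs.mul hsq.continuousOn
  have hg : ContinuousOn (fun s => (Real.sqrt s)⁻¹) (Set.Icc r a) := by
    refine hsq.continuousOn.inv₀ (fun x hx => ?_)
    exact (Real.sqrt_pos.2 (lt_of_lt_of_le hr0 hx.1)).ne'
  have hmeas : MeasurableSet (Set.Ioc r a) := measurableSet_Ioc
  set μ := volume.restrict (Set.Ioc r a) with hμ
  have hfin : Fact (μ Set.univ < ⊤) := ⟨by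
    rw [hμ, Measure.restrict_apply_univ, Real.volume_Ioc]; exact ENNReal.ofReal_lt_top⟩
  have hmemf : MemLp (fun s => |ξ' s| * Real.sqrt s) (ENNReal.ofReal 2) μ := by
    rw [show ENNReal.ofReal 2 = 2 by norm_num]
    refine (memLp_two_iff_integrable_sq ?_).2 ?_
    · exact (hf.mono Set.Ioc_subset_Icc_self).aestronglyMeasurable hmeas
    · exact (((hf.pow 2).integrableOn_compact isCompact_Icc).mono_set
        Set.Ioc_subset_Icc_self)
  have hmemg : MemLp (fun s => (Real.sqrt s)⁻¹) (ENNReal.ofReal 2) μ := by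
    rw [show ENNReal.ofReal 2 = 2 by norm_num]
    refine (memLp_two_iff_integrable_sq ?_).2 ?_
    · exact (hg.mono Set.Ioc_subset_Icc_self).aestronglyMeasurable hmeas
    · exact (((hg.pow 2).integrableOn_compact isCompact_Icc).mono_set
        Set.Ioc_subset_Icc_self)
  have hconj : Real.HolderConjugate 2 2 := Real.HolderConjugate.two_two
  have hCS := integral_mul_le_Lp_mul_Lq_of_nonneg hconj
    (Filter.Eventually.of_forall (fun x => by positivity))
    (Filter.Eventually.of_forall (fun x => by positivity)) hmemf hmemg
  -- identify the three integrals
  have heq1 : ∫ s, |ξ' s| * Real.sqrt s * (Real.sqrt s)⁻¹ ∂μ = ∫ s in Set.Ioc r a, |ξ' s| := by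
    refine setIntegral_congr_fun hmeas (fun x hx => ?_)
    have : Real.sqrt x ≠ 0 := (Real.sqrt_pos.2 (lt_trans hr0 hx.1)).ne'
    field_simp
  have heq2 : ∫ s, (|ξ' s| * Real.sqrt s) ^ (2:ℝ) ∂μ = ∫ s in Set.Ioc r a, |ξ' s|^2 * s := by
    refine setIntegral_congr_fun hmeas (fun x hx => ?_)
    rw [show ((|ξ' x| * Real.sqrt x) ^ (2:ℝ)) = (|ξ' x| * Real.sqrt x) ^ (2:ℕ) by
      rw [← Real.rpow_natCast]; norm_num]
    rw [mul_pow, Real.sq_sqrt (le_of_lt (lt_trans hr0 hx.1))]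
  have heq3 : ∫ s, ((Real.sqrt s)⁻¹) ^ (2:ℝ) ∂μ = Real.log a - Real.log r := by
    have : ∫ s, ((Real.sqrt s)⁻¹) ^ (2:ℝ) ∂μ = ∫ s in Set.Ioc r a, s⁻¹ := by
      refine setIntegral_congr_fun hmeas (fun x hx => ?_)
      rw [show (((Real.sqrt x)⁻¹) ^ (2:ℝ)) = ((Real.sqrt x)⁻¹) ^ (2:ℕ) by
        rw [← Real.rpow_natCast]; norm_num]
      rw [inv_pow, Real.sq_sqrt (le_of_lt (lt_trans hr0 hx.1))]
    rw [this, ← intervalIntegral.integral_of_le hra.le]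
    rw [integral_inv (by rw [Set.uIcc_of_le hra.le]; intro h; exact absurd h.1 (not_le.2 hr0))]
    rw [Real.log_div (by linarith : a ≠ 0) (ne_of_gt hr0)]
  rw [heq1, heq2, heq3] at hCS
  -- monotonicity of the two factors
  have hIw : IntegrableOn (fun s => |ξ' s|^2 * s) (Set.Ioc r (r₀/3)) := by
    have hsub3 : Set.Icc r (r₀/3) ⊆ Set.Ioc 0 r₀ := fun x hx =>
      ⟨lt_of_lt_of_le hr0 hx.1, le_trans hx.2 h30⟩
    exact ((((hcont.mono hsub3).abs.pow 2).mul continuousOn_id).integrableOn_compact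
      isCompact_Icc).mono_set Set.Ioc_subset_Icc_self
  have hmono1 : ∫ s in Set.Ioc r a, |ξ' s|^2 * s ≤ ∫ s in Set.Ioc r (r₀/3), |ξ' s|^2 * s := by
    apply setIntegral_mono_set hIw
    · filter_upwards [ae_restrict_mem measurableSet_Ioc] with x hx
      exact mul_nonneg (by positivity) (le_of_lt (lt_trans hr0 hx.1))
    · exact HasSubset.Subset.eventuallyLE (Set.Ioc_subset_Ioc_right (le_trans ha.2 le_rfl))
  have hlog : Real.log a - Real.log r ≤ |Real.log (r₀/3) - Real.log r| := by
    have h1 : Real.log a ≤ Real.log (r₀/3) := Real.log_le_log (by linarith) ha.2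
    have h2 : Real.log r ≤ Real.log a := Real.log_le_log hr0 hra.le
    rw [abs_of_nonneg (by linarith)]; linarith
  have hnn1 : (0:ℝ) ≤ ∫ s in Set.Ioc r a, |ξ' s|^2 * s := by
    apply setIntegral_nonneg measurableSet_Ioc
    intro x hx; exact mul_nonneg (by positivity) (le_of_lt (lt_trans hr0 hx.1))
  have hnn2 : (0:ℝ) ≤ Real.log a - Real.log r := by
    have := Real.log_le_log hr0 hra.le; linarith
  have hbound : ∫ s in Set.Ioc r a, |ξ' s| ≤
      Real.sqrt (∫ s in Set.Ioc r (r₀/3), |ξ' s|^2 * s)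
        * Real.sqrt |Real.log (r₀/3) - Real.log r| := by
    rw [← Real.sqrt_eq_rpow, ← Real.sqrt_eq_rpow] at hCS
    refine le_trans hCS ?_
    exact mul_le_mul (Real.sqrt_le_sqrt hmono1) (Real.sqrt_le_sqrt hlog)
      (Real.sqrt_nonneg _) (Real.sqrt_nonneg _)
  -- assemble
  have habs : ξ r ≤ |ξ a| + ∫ s in Set.Ioc r a, |ξ' s| := by
    have h1 : ξ r = ξ a - ∫ x in r..a, ξ' x := by rw [hFTC]; ring
    have h2 : |∫ x in r..a, ξ' x| ≤ ∫ x in Set.Ioc r a, |ξ' x| := by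
      rw [intervalIntegral.integral_of_le hra.le]
      simpa [Real.norm_eq_abs] using
        MeasureTheory.norm_integral_le_integral_norm (μ := volume.restrict (Set.Ioc r a)) ξ'
    have h3 := le_abs_self (ξ a)
    have h4 := neg_abs_le (∫ x in r..a, ξ' x)
    linarith
  linarith [hstep1, hbound, habs]
end

section
/- Let p : [0, r₀] → ℝ satisfy p ≥ 0, p(r₀) = 0, p' ≤ 0 on (s₁, r₀], and suppose g(s₁) := sup_{s₁ ≤ s ≤ r₀} p(s)/(−p'(s)) is finite. Then ∫_{s₁}^{r₀} (−p'(r)) ξ(r)² dr ≤ 2 p(s₁) ξ(s₁)² + 4 g(s₁) ∫_{s₁}^{r₀} p(r) ξ'(r)² dr for every C¹ function ξ on [s₁, r₀]. -/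
open Set MeasureTheory Filter Topology

private lemma amgm_aux (P Q G a b : ℝ) (hP : 0 ≤ P) (hQ : 0 ≤ Q) (hG : 0 ≤ G)
    (hPQ : P ≤ G * Q) : 2 * (P * (a * b)) ≤ 1/2 * (Q * a^2) + 2 * G * (P * b^2) := by
  rcases hQ.eq_or_lt with hQ0 | hQ0
  · have hP0 : P = 0 := le_antisymm (by nlinarith) hP
    simp [hP0]
    positivity
  · nlinarith [sq_nonneg (Q*a - 2*P*b), mul_nonneg (sub_nonneg.2 hPQ) (mul_nonneg hP (sq_nonneg b))]

private lemma key_aux (r₀ s₁ : ℝ) (hlt : s₁ < r₀) (p p' : ℝ → ℝ)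
    (hp : ∀ x ∈ Icc s₁ r₀, HasDerivAt p (p' x) x)
    (hp'c : ContinuousOn p' (Icc s₁ r₀))
    (hpr₀ : p r₀ = 0)
    (hp'le : ∀ x ∈ Ioc s₁ r₀, p' x ≤ 0)
    (G : ℝ) (hG0 : 0 ≤ G)
    (hub : ∀ v ∈ Icc s₁ r₀, p v / (-p' v) ≤ G) :
    ∀ u ∈ Ioc s₁ r₀, p u ≤ G * (-p' u) := by
  have hK : ∀ v ∈ Icc s₁ r₀, p' v < 0 → p v ≤ G * (-p' v) := by
    intro v hv hv'
    have h := hub v hv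
    rwa [div_le_iff₀ (by linarith : (0:ℝ) < -p' v)] at h
  by_contra hcon
  push_neg at hcon
  obtain ⟨u, hu, hgt⟩ := hcon
  have huIcc : u ∈ Icc s₁ r₀ := ⟨hu.1.le, hu.2⟩
  have hu'0 : p' u = 0 := by
    rcases (hp'le u hu).lt_or_eq with h | h
    · exact absurd (hK u huIcc h) (not_le.2 hgt)
    · exact h
  have hpu : 0 < p u := by rw [hu'0] at hgt; simpa using hgt
  set T : Set ℝ := {v | v ∈ Icc u r₀ ∧ ∀ w ∈ Icc u v, p' w = 0} with hT
  have huT : u ∈ T := by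
    refine ⟨⟨le_refl u, hu.2⟩, fun w hw => ?_⟩
    have hwu : w = u := le_antisymm hw.2 hw.1
    rw [hwu]; exact hu'0
  have hbdd : BddAbove T := ⟨r₀, fun v hv => hv.1.2⟩
  set t := sSup T with htdef
  have hut : u ≤ t := le_csSup hbdd huT
  have htr : t ≤ r₀ := csSup_le ⟨u, huT⟩ fun v hv => hv.1.2
  have htIcc : t ∈ Icc s₁ r₀ := ⟨le_trans hu.1.le hut, htr⟩
  have hzero : ∀ w ∈ Ico u t, p' w = 0 := by
    intro w hw
    obtain ⟨v, hvT, hwv⟩ := exists_lt_of_lt_csSup ⟨u, huT⟩ hw.2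
    exact hvT.2 w ⟨hw.1, hwv.le⟩
  have hconst : ∀ w ∈ Ico u t, p w = p u := by
    intro w hw
    have hcont : ContinuousOn p (Icc u w) := fun x hx =>
      (hp x ⟨le_trans hu.1.le hx.1,
        le_trans hx.2 (le_trans hw.2.le htr)⟩).continuousAt.continuousWithinAt
    have hder : ∀ x ∈ Ico u w, HasDerivWithinAt p 0 (Ici x) x := by
      intro x hx
      have hxt : x < t := lt_of_lt_of_le hx.2 hw.2.le
      have h0 : p' x = 0 := hzero x ⟨hx.1, hxt⟩
      have hd := hp x ⟨le_trans hu.1.le hx.1, le_trans hxt.le htr⟩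
      rw [h0] at hd
      exact hd.hasDerivWithinAt
    exact constant_of_has_deriv_right_zero hcont hder w ⟨hw.1, le_refl w⟩
  have hpt : p t = p u ∧ p' t = 0 := by
    rcases eq_or_lt_of_le hut with h | h
    · exact ⟨by rw [← h], by rw [← h]; exact hu'0⟩
    · have hmem : Ico u t ∈ 𝓝[<] t := Ico_mem_nhdsLT_of_mem ⟨h, le_refl t⟩
      have h1 : Tendsto p (𝓝[<] t) (𝓝 (p t)) :=
        ((hp t htIcc).continuousAt.tendsto).mono_left nhdsWithin_le_nhds
      have h2 : Tendsto p (𝓝[<] t) (𝓝 (p u)) := by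
        refine tendsto_const_nhds.congr' ?_
        filter_upwards [hmem] with w hw
        exact (hconst w hw).symm
      have h3 : Tendsto p' (𝓝[<] t) (𝓝 (p' t)) :=
        (hp'c t htIcc).mono_left (nhdsWithin_le_of_mem (mem_of_superset hmem
          (fun w hw => ⟨le_trans hu.1.le hw.1, le_trans hw.2.le htr⟩)))
      have h4 : Tendsto p' (𝓝[<] t) (𝓝 0) := by
        refine tendsto_const_nhds.congr' ?_
        filter_upwards [hmem] with w hw
        exact (hzero w hw).symm
      exact ⟨tendsto_nhds_unique h1 h2, tendsto_nhds_unique h3 h4⟩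
  have htlt : t < r₀ := by
    rcases lt_or_eq_of_le htr with h | h
    · exact h
    · exfalso; rw [h, hpr₀] at hpt; linarith [hpt.1]
  have hfc : ContinuousWithinAt (fun v => p v + G * p' v) (Icc s₁ r₀) t :=
    ((hp t htIcc).continuousAt.continuousWithinAt).add (continuousWithinAt_const.mul (hp'c t htIcc))
  have hpos : 0 < p t + G * p' t := by rw [hpt.2, hpt.1]; simpa using hpu
  have hev : ∀ᶠ v in 𝓝[Icc s₁ r₀] t, 0 < p v + G * p' v := hfc.eventually_const_lt hpos
  obtain ⟨ε, hε, hball⟩ := Metric.mem_nhdsWithin_iff.1 hev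
  set δ := min (ε/2) (r₀ - t) with hδdef
  have hδ2 : δ ≤ ε/2 := min_le_left _ _
  have hδ3 : δ ≤ r₀ - t := min_le_right _ _
  have hδ : 0 < δ := lt_min (by linarith) (by linarith)
  have hTδ : t + δ ∈ T := by
    refine ⟨⟨le_trans hut (by linarith), by linarith⟩, ?_⟩
    intro w hw
    rcases lt_or_ge w t with hwt | hwt
    · exact hzero w ⟨hw.1, hwt⟩
    · have hwle : w ≤ t + δ := hw.2
      have hwIcc : w ∈ Icc s₁ r₀ := ⟨le_trans htIcc.1 hwt, by linarith⟩
      have hwball : w ∈ Metric.ball t ε := by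
        rw [Metric.mem_ball, Real.dist_eq, abs_of_nonneg (by linarith : (0:ℝ) ≤ w - t)]
        linarith
      have hfw : 0 < p w + G * p' w := hball ⟨hwball, hwIcc⟩
      have hwIoc : w ∈ Ioc s₁ r₀ := ⟨lt_of_lt_of_le hu.1 (le_trans hut hwt), hwIcc.2⟩
      rcases (hp'le w hwIoc).lt_or_eq with h | h
      · have hle := hK w hwIcc h
        linarith
      · exact h
  have : t + δ ≤ t := le_csSup hbdd hTδ
  linarith

/-- Weighted Hardy-type boundary-degenerate inequality near r₀. -/
theorem stmt_4 (r₀ s₁ : ℝ) (hs₁ : 0 < s₁) (hlt : s₁ < r₀)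
    (p p' ξ ξ' : ℝ → ℝ)
    (hp : ∀ x ∈ Set.Icc s₁ r₀, HasDerivAt p (p' x) x)
    (hξ : ∀ x ∈ Set.Icc s₁ r₀, HasDerivAt ξ (ξ' x) x)
    (hp'c : ContinuousOn p' (Set.Icc s₁ r₀))
    (hξ'c : ContinuousOn ξ' (Set.Icc s₁ r₀))
    (hpnn : ∀ x ∈ Set.Icc s₁ r₀, 0 ≤ p x)
    (hpr₀ : p r₀ = 0)
    (hp'le : ∀ x ∈ Set.Ioc s₁ r₀, p' x ≤ 0)
    (G : ℝ)
    (hG : IsLUB ((fun s => p s / (-p' s)) '' Set.Icc s₁ r₀) G) :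
    ∫ r in Set.Ioc s₁ r₀, (-p' r) * (ξ r)^2 ≤
      2 * p s₁ * (ξ s₁)^2 + 4 * G * ∫ r in Set.Ioc s₁ r₀, p r * (ξ' r)^2 := by
  have hle := hlt.le
  have hpc : ContinuousOn p (Icc s₁ r₀) := fun x hx => (hp x hx).continuousAt.continuousWithinAt
  have hξc : ContinuousOn ξ (Icc s₁ r₀) := fun x hx => (hξ x hx).continuousAt.continuousWithinAt
  have hG0 : 0 ≤ G := hG.1 ⟨r₀, right_mem_Icc.2 hle, by simp [hpr₀]⟩
  have hub : ∀ v ∈ Icc s₁ r₀, p v / (-p' v) ≤ G := fun v hv => hG.1 ⟨v, hv, rfl⟩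
  have hkey := key_aux r₀ s₁ hlt p p' hp hp'c hpr₀ hp'le G hG0 hub
  have hcA : ContinuousOn (fun r => (-p' r) * ξ r ^ 2) (Icc s₁ r₀) := (hp'c.neg).mul (hξc.pow 2)
  have hcB : ContinuousOn (fun r => p r * ξ' r ^ 2) (Icc s₁ r₀) := hpc.mul (hξ'c.pow 2)
  have hcC : ContinuousOn (fun r => 2 * (p r * (ξ r * ξ' r))) (Icc s₁ r₀) :=
    continuousOn_const.mul (hpc.mul (hξc.mul hξ'c))
  have hcD : ContinuousOn (fun r => p' r * ξ r ^ 2) (Icc s₁ r₀) := hp'c.mul (hξc.pow 2)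
  have hiA : IntegrableOn (fun r => (-p' r) * ξ r ^ 2) (Ioc s₁ r₀) :=
    (hcA.integrableOn_Icc).mono_set Ioc_subset_Icc_self
  have hiB : IntegrableOn (fun r => p r * ξ' r ^ 2) (Ioc s₁ r₀) :=
    (hcB.integrableOn_Icc).mono_set Ioc_subset_Icc_self
  have hiC : IntegrableOn (fun r => 2 * (p r * (ξ r * ξ' r))) (Ioc s₁ r₀) :=
    (hcC.integrableOn_Icc).mono_set Ioc_subset_Icc_self
  have hiD : IntegrableOn (fun r => p' r * ξ r ^ 2) (Ioc s₁ r₀) :=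
    (hcD.integrableOn_Icc).mono_set Ioc_subset_Icc_self
  have hFTC : ∫ x in s₁..r₀, (p' x * ξ x ^ 2 + 2 * (p x * (ξ x * ξ' x)))
      = p r₀ * ξ r₀ ^ 2 - p s₁ * ξ s₁ ^ 2 := by
    apply intervalIntegral.integral_eq_sub_of_hasDerivAt
    · intro x hx
      rw [uIcc_of_le hle] at hx
      have h1 : HasDerivAt (fun y => p y * ξ y ^ 2) _ x := (hp x hx).mul ((hξ x hx).pow 2)
      refine h1.congr_deriv ?_
      ring
    · apply ContinuousOn.intervalIntegrable
      rw [uIcc_of_le hle]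
      exact hcD.add hcC
  rw [intervalIntegral.integral_of_le hle] at hFTC
  have hsplit : (∫ r in Ioc s₁ r₀, (p' r * ξ r ^ 2 + 2 * (p r * (ξ r * ξ' r)))) =
      (∫ r in Ioc s₁ r₀, p' r * ξ r ^ 2) + ∫ r in Ioc s₁ r₀, 2 * (p r * (ξ r * ξ' r)) :=
    integral_add hiD hiC
  have hAD : (∫ r in Ioc s₁ r₀, p' r * ξ r ^ 2) = -∫ r in Ioc s₁ r₀, (-p' r) * ξ r ^ 2 := by
    rw [← integral_neg]
    congr 1; funext r; ring
  have hmono : (∫ r in Ioc s₁ r₀, 2 * (p r * (ξ r * ξ' r))) ≤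
      ∫ r in Ioc s₁ r₀, (1/2 * ((-p' r) * ξ r ^ 2) + 2 * G * (p r * ξ' r ^ 2)) := by
    apply setIntegral_mono_on hiC ((hiA.const_mul (1/2)).add (hiB.const_mul (2*G)))
      measurableSet_Ioc
    intro r hr
    exact amgm_aux (p r) (-p' r) G (ξ r) (ξ' r) (hpnn r ⟨hr.1.le, hr.2⟩)
      (by linarith [hp'le r hr]) hG0 (hkey r hr)
  have hsum : (∫ r in Ioc s₁ r₀, (1/2 * ((-p' r) * ξ r ^ 2) + 2 * G * (p r * ξ' r ^ 2))) =
      1/2 * (∫ r in Ioc s₁ r₀, (-p' r) * ξ r ^ 2) + 2 * G * ∫ r in Ioc s₁ r₀, p r * ξ' r ^ 2 := by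
    rw [integral_add (hiA.const_mul (1/2)) (hiB.const_mul (2*G)), integral_const_mul,
      integral_const_mul]
  rw [hpr₀] at hFTC
  have goal : (∫ r in Ioc s₁ r₀, (-p' r) * ξ r ^ 2) ≤
      2 * p s₁ * ξ s₁ ^ 2 + 4 * G * ∫ r in Ioc s₁ r₀, p r * ξ' r ^ 2 := by
    rw [hsplit, hAD] at hFTC
    linarith [hmono, hsum.le, hsum.ge]
  exact goal
end

section
/- Suppose λ : (0, ∞) → ℝ is continuous and strictly increasing, λ(s) ≤ −C₀ + C₁ s for some constants C₀, C₁ > 0, and λ(s) → +∞ as s → ∞. Let S = λ⁻¹((−∞, 0)) and define μ(s) = √(−λ(s)) on S. Then S = (0, s*) for some s* ∈ (0, ∞), and there exists a unique s ∈ S with s = μ(s). -/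
/-- Fixed-point argument converting the modified variational problem into a
genuine growing mode: the negative set of `lam` is an interval `(0, s*)` and
there is a unique fixed point `s = √(-lam s)`. -/
theorem stmt_5 (lam : ℝ → ℝ) (C₀ C₁ : ℝ) (hC₀ : 0 < C₀) (hC₁ : 0 < C₁)
    (hcont : ContinuousOn lam (Set.Ioi 0))
    (hmono : StrictMonoOn lam (Set.Ioi 0))
    (hub : ∀ s > (0:ℝ), lam s ≤ -C₀ + C₁ * s)
    (hlim : Filter.Tendsto lam Filter.atTop Filter.atTop) :
    ∃ sstar : ℝ, 0 < sstar ∧ {s : ℝ | 0 < s ∧ lam s < 0} = Set.Ioo 0 sstar ∧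
      ∃! s : ℝ, (0 < s ∧ lam s < 0) ∧ s = Real.sqrt (-lam s) := by
  set S : Set ℝ := {s : ℝ | 0 < s ∧ lam s < 0} with hSdef
  -- a good small point s₀
  set s₀ : ℝ := min (C₀ / (2 * C₁)) (Real.sqrt C₀ / 2) with hs₀def
  have hs₀pos : 0 < s₀ := by
    apply lt_min
    · positivity
    · have := Real.sqrt_pos.mpr hC₀; linarith
  have hC₁s₀ : C₁ * s₀ ≤ C₀ / 2 := by
    have h1 : s₀ ≤ C₀ / (2 * C₁) := min_le_left _ _
    have := mul_le_mul_of_nonneg_left h1 hC₁.le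
    calc C₁ * s₀ ≤ C₁ * (C₀ / (2 * C₁)) := this
      _ = C₀ / 2 := by field_simp
  have hlam₀ : lam s₀ ≤ -C₀ / 2 := by
    have := hub s₀ hs₀pos
    linarith
  have hs₀S : s₀ ∈ S := ⟨hs₀pos, by nlinarith⟩
  have hs₀sq : s₀ ^ 2 ≤ C₀ / 4 := by
    have h1 : s₀ ≤ Real.sqrt C₀ / 2 := min_le_right _ _
    have h2 : s₀ ^ 2 ≤ (Real.sqrt C₀ / 2) ^ 2 :=
      pow_le_pow_left₀ hs₀pos.le h1 2
    have h3 : (Real.sqrt C₀ / 2) ^ 2 = C₀ / 4 := by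
      rw [div_pow, Real.sq_sqrt hC₀.le]; norm_num
    linarith
  -- bounded above
  obtain ⟨N, hN⟩ := Filter.eventually_atTop.mp (hlim.eventually_ge_atTop 0)
  have hbdd : BddAbove S := by
    refine ⟨N, fun s hs => ?_⟩
    by_contra h
    exact absurd (hN s (not_le.mp h).le) (not_le.mpr hs.2)
  have hne : S.Nonempty := ⟨s₀, hs₀S⟩
  set sstar : ℝ := sSup S with hsstardef
  -- every element of S is strictly below sstar
  have hlt : ∀ s ∈ S, s < sstar := by
    intro s hs
    have hca : ContinuousAt lam s := hcont.continuousAt (Ioi_mem_nhds hs.1)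
    have h1 : ∀ᶠ t in nhds s, lam t < 0 := hca (Iio_mem_nhds hs.2)
    have h2 : ∀ᶠ t in nhdsWithin s (Set.Ioi s), lam t < 0 :=
      h1.filter_mono nhdsWithin_le_nhds
    have h3 : ∀ᶠ t in nhdsWithin s (Set.Ioi s), s < t :=
      eventually_mem_nhdsWithin
    obtain ⟨t, ht0, hts⟩ := (h2.and h3).exists
    exact lt_of_lt_of_le hts (le_csSup hbdd ⟨hs.1.trans hts, ht0⟩)
  have hSIoo : S = Set.Ioo 0 sstar := by
    ext t
    constructor
    · intro ht; exact ⟨ht.1, hlt t ht⟩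
    · rintro ⟨ht0, hts⟩
      obtain ⟨u, huS, htu⟩ := exists_lt_of_lt_csSup hne hts
      exact ⟨ht0, lt_trans (hmono ht0 huS.1 htu) huS.2⟩
  have hs₀star : s₀ < sstar := hlt s₀ hs₀S
  have hsstarpos : 0 < sstar := hs₀pos.trans hs₀star
  have hlamstar : 0 ≤ lam sstar := by
    by_contra h
    have : sstar ∈ S := ⟨hsstarpos, not_le.mp h⟩
    exact lt_irrefl sstar (hlt sstar this)
  -- the auxiliary function g
  set g : ℝ → ℝ := fun s => s ^ 2 + lam s with hgdef
  have hgmono : StrictMonoOn g (Set.Ioi 0) := by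
    intro a ha b hb hab
    have h1 : a ^ 2 < b ^ 2 := by nlinarith [Set.mem_Ioi.mp ha]
    have h2 : lam a < lam b := hmono ha hb hab
    simpa [hgdef] using add_lt_add h1 h2
  have hg₀ : g s₀ < 0 := by
    simp only [hgdef]; nlinarith
  -- find s₁ < sstar with g s₁ > 0
  have hca : ContinuousAt lam sstar := hcont.continuousAt (Ioi_mem_nhds hsstarpos)
  have hgca : ContinuousAt g sstar := by
    exact ((continuous_pow 2).continuousAt).add hca
  have hgstar : 0 < g sstar := by
    have : 0 < sstar ^ 2 := by positivity
    simp only [hgdef]; linarith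
  have h1 : ∀ᶠ t in nhds sstar, 0 < g t := hgca (Ioi_mem_nhds hgstar)
  have h2 : ∀ᶠ t in nhds sstar, s₀ < t := Ioi_mem_nhds hs₀star
  have h3 : ∀ᶠ t in nhdsWithin sstar (Set.Iio sstar), 0 < g t ∧ s₀ < t :=
    (h1.and h2).filter_mono nhdsWithin_le_nhds
  have h4 : ∀ᶠ t in nhdsWithin sstar (Set.Iio sstar), t < sstar :=
    eventually_mem_nhdsWithin
  obtain ⟨s₁, ⟨hg₁, hs₀₁⟩, hs₁star⟩ := (h3.and h4).exists
  -- IVT on [s₀, s₁]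
  have hsub : Set.Icc s₀ s₁ ⊆ Set.Ioi 0 := fun x hx => lt_of_lt_of_le hs₀pos hx.1
  have hgcont : ContinuousOn g (Set.Icc s₀ s₁) :=
    ((continuous_pow 2).continuousOn).add (hcont.mono hsub)
  obtain ⟨r, hrmem, hgr⟩ :=
    intermediate_value_Ioo hs₀₁.le hgcont (Set.mem_Ioo.mpr ⟨hg₀, hg₁⟩)
  have hr0 : 0 < r := hs₀pos.trans hrmem.1
  have hrstar : r < sstar := hrmem.2.trans hs₁star
  have hlamr : lam r = -(r ^ 2) := by
    have : r ^ 2 + lam r = 0 := hgr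
    linarith
  have hrS : r ∈ S := ⟨hr0, by rw [hlamr]; nlinarith⟩
  refine ⟨sstar, hsstarpos, hSIoo, r, ⟨⟨hr0, hrS.2⟩, ?_⟩, ?_⟩
  · rw [hlamr, neg_neg, Real.sqrt_sq hr0.le]
  · rintro t ⟨⟨ht0, htneg⟩, hteq⟩
    have htsq : t ^ 2 = -lam t := by
      conv_lhs => rw [hteq]
      exact Real.sq_sqrt (by linarith : 0 ≤ -lam t)
    have hgt : g t = 0 := by simp only [hgdef]; linarith
    have hgr' : g r = 0 := hgr
    exact hgmono.injOn ht0 (Set.mem_Ioi.mpr hr0) (by rw [hgt, hgr'])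
end

section
/- Let p ∈ C¹([0, r₀]) with p ≥ 0, p(r₀) = 0, p not identically zero, and define B_θ²(r) = −(2/r²) ∫₀^r s² p'(s) ds ≥ 0. Then there exists r* ∈ (0, r₀) such that p'(r*) + 2γ p(r*) B_θ²(r*) / (r* (γ p(r*) + B_θ²(r*))) < 0, where γ > 1 is a fixed constant. -/
/-- Unconditional m = 0 (sausage) instability criterion for any z-pinch
equilibrium. -/
theorem stmt_8 (r₀ γ : ℝ) (hr₀ : 0 < r₀) (hγ : 1 < γ)
    (p p' : ℝ → ℝ)
    (hp : ∀ x ∈ Set.Icc 0 r₀, HasDerivAt p (p' x) x)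
    (hp'c : ContinuousOn p' (Set.Icc 0 r₀))
    (hpnn : ∀ x ∈ Set.Icc 0 r₀, 0 ≤ p x)
    (hpr₀ : p r₀ = 0)
    (hne : ∃ x ∈ Set.Icc (0:ℝ) r₀, p x ≠ 0)
    (Bsq : ℝ → ℝ)
    (hBsq : ∀ r ∈ Set.Ioc (0:ℝ) r₀,
      Bsq r = -(2/r^2) * ∫ s in Set.Ioc (0:ℝ) r, s^2 * p' s)
    (hBnn : ∀ r ∈ Set.Ioc (0:ℝ) r₀, 0 ≤ Bsq r) :
    ∃ rs ∈ Set.Ioo (0:ℝ) r₀,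
      p' rs + 2 * γ * p rs * Bsq rs / (rs * (γ * p rs + Bsq rs)) < 0 := by
  by_contra hcon
  push_neg at hcon
  -- find a ∈ (0, r₀) with p a > 0
  obtain ⟨x, hx, hpx⟩ := hne
  have hpxpos : 0 < p x := lt_of_le_of_ne (hpnn x hx) (Ne.symm hpx)
  have hxlt : x < r₀ := by
    rcases lt_or_eq_of_le hx.2 with h | h
    · exact h
    · exact absurd (h ▸ hpx) (by simp [hpr₀])
  have hcontx : ContinuousAt p x := (hp x hx).continuousAt
  have hxcl : x ∈ closure (Set.Ioo (0:ℝ) r₀) := by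
    rw [closure_Ioo hr₀.ne]; exact ⟨hx.1, hx.2⟩
  have hnb : (nhdsWithin x (Set.Ioo (0:ℝ) r₀)).NeBot :=
    mem_closure_iff_nhdsWithin_neBot.mp hxcl
  have hev : ∀ᶠ y in nhds x, 0 < p y := hcontx.eventually (eventually_gt_nhds hpxpos)
  have hfr : ∃ᶠ y in nhdsWithin x (Set.Ioo (0:ℝ) r₀), 0 < p y ∧ y ∈ Set.Ioo (0:ℝ) r₀ :=
    ((hev.filter_mono nhdsWithin_le_nhds).and eventually_mem_nhdsWithin).frequently
  obtain ⟨a, hpa, ha⟩ := hfr.exists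
  -- key: derivative bound on (0, r₀)
  have hkey : ∀ y ∈ Set.Ioo (0:ℝ) r₀, 0 ≤ 2 * γ * p y + y * p' y := by
    intro y hy
    have hy0 : 0 < y := hy.1
    have hyIcc : y ∈ Set.Icc 0 r₀ := ⟨hy0.le, hy.2.le⟩
    have hpy : 0 ≤ p y := hpnn y hyIcc
    have hBy : 0 ≤ Bsq y := hBnn y ⟨hy0, hy.2.le⟩
    have hF := hcon y hy
    have hT : 2 * γ * p y * Bsq y / (y * (γ * p y + Bsq y)) ≤ 2 * γ * p y / y := by
      have h1 : 2 * γ * p y * Bsq y / (y * (γ * p y + Bsq y))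
          = (2 * γ * p y / y) * (Bsq y / (γ * p y + Bsq y)) := by
        rw [mul_div_mul_comm]
      rw [h1]
      have h2 : Bsq y / (γ * p y + Bsq y) ≤ 1 :=
        div_le_one_of_le₀ (le_add_of_nonneg_left (by positivity)) (by positivity)
      calc (2 * γ * p y / y) * (Bsq y / (γ * p y + Bsq y))
          ≤ (2 * γ * p y / y) * 1 := by
            apply mul_le_mul_of_nonneg_left h2 (by positivity)
        _ = 2 * γ * p y / y := mul_one _
    have hp' : -(2 * γ * p y / y) ≤ p' y := by linarith
    have := mul_le_mul_of_nonneg_left hp' hy0.le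
    have hc : y * (2 * γ * p y / y) = 2 * γ * p y := by
      field_simp
    nlinarith [this, hc]
  -- monotone function h(r) = r^(2γ) * p r on [a, r₀]
  set h : ℝ → ℝ := fun y => y ^ (2*γ) * p y with hh
  have hIccsub : Set.Icc a r₀ ⊆ Set.Icc 0 r₀ := Set.Icc_subset_Icc ha.1.le le_rfl
  have hderiv : ∀ y ∈ Set.Ioo a r₀,
      HasDerivAt h (y ^ (2*γ-1) * (2*γ * p y + y * p' y)) y := by
    intro y hy
    have hy0 : 0 < y := lt_trans ha.1 hy.1
    have hyIcc : y ∈ Set.Icc 0 r₀ := ⟨hy0.le, hy.2.le⟩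
    have h1 : HasDerivAt (fun z : ℝ => z ^ (2*γ)) (2*γ * y ^ (2*γ-1)) y :=
      Real.hasDerivAt_rpow_const (Or.inl hy0.ne')
    have h2 := h1.mul (hp y hyIcc)
    refine HasDerivAt.congr_deriv h2 ?_
    have e1 : (2*γ-1)+1 = 2*γ := by ring
    have e : y ^ (2*γ) = y ^ (2*γ-1) * y := by
      nth_rewrite 1 [← e1]
      rw [Real.rpow_add hy0, Real.rpow_one]
    rw [e]; ring
  have hmono : MonotoneOn h (Set.Icc a r₀) := by
    apply monotoneOn_of_deriv_nonneg (convex_Icc a r₀)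
    · apply ContinuousOn.mul
      · exact (Real.continuous_rpow_const (by positivity)).continuousOn
      · exact fun y hy => ((hp y (hIccsub hy)).continuousAt).continuousWithinAt
    · intro y hy
      rw [interior_Icc] at hy
      exact (hderiv y hy).differentiableAt.differentiableWithinAt
    · intro y hy
      rw [interior_Icc] at hy
      rw [(hderiv y hy).deriv]
      have hy0 : 0 < y := lt_trans ha.1 hy.1
      have := hkey y ⟨hy0, hy.2⟩
      positivity
  have hle := hmono (Set.left_mem_Icc.mpr ha.2.le) (Set.right_mem_Icc.mpr ha.2.le) ha.2.le
  have hha : 0 < h a := by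
    have : (0:ℝ) < a ^ (2*γ) := Real.rpow_pos_of_pos ha.1 _
    exact mul_pos this hpa
  have hhr : h r₀ = 0 := by simp [hh, hpr₀]
  linarith
end
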